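/- In the bubblesort field V_bs: let σ = [b_0, ..., b_k] be a source simplex (consecutive entries distinct, not strictly increasing, and its leading alternating segment b_ℓ, ..., b_m ends with the smaller value u). Let τ = V_bs(σ) = [b_0, ..., b_m, v, b_{m+1}, ..., b_k], obtained by inserting v = b_ℓ right after position m. Then ∂_{m+1}τ = σ, and m+1 is the unique index i with ∂_iτ = σ; i.e., σ is a regular face of τ. -/

import Mathlib

/-- A tuple representative `[b_0, …, b_k]` of a simplex of `K(ℤ,1)` is nondegenerate iff
consecutive entries are distinct. -/
def nondegZ (l : List ℤ) : Prop :=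
  ∀ i, i + 1 < l.length → l.getD i 0 ≠ l.getD (i + 1) 0

/-- `ℓ` is the leading index of the tuple `[b_0, …, b_k]`: the smallest index with
`b_ℓ > b_{ℓ+1}`. -/
def leadIdx (l : List ℤ) (ℓ : ℕ) : Prop :=
  ℓ + 1 < l.length ∧ (∀ i < ℓ, l.getD i 0 < l.getD (i + 1) 0) ∧
    l.getD (ℓ + 1) 0 < l.getD ℓ 0

/-- `b_ℓ, …, b_m` is the leading alternating segment of the tuple: with `v = b_ℓ`,
`u = b_{ℓ+1}`, it is the maximal contiguous segment starting at position `ℓ` containing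
only the values `u` and `v`. -/
def las (l : List ℤ) (ℓ m : ℕ) : Prop :=
  ℓ + 1 ≤ m ∧ m < l.length ∧
    (∀ i, ℓ ≤ i → i ≤ m → l.getD i 0 = l.getD ℓ 0 ∨ l.getD i 0 = l.getD (ℓ + 1) 0) ∧
    (m + 1 = l.length ∨
      (l.getD (m + 1) 0 ≠ l.getD ℓ 0 ∧ l.getD (m + 1) 0 ≠ l.getD (ℓ + 1) 0))

/-- The bubblesort vector field, as a relation: `vbsRel σ τ` holds iff `σ` is a source
simplex (its leading alternating segment `b_ℓ, …, b_m` ends with the smaller value `u`)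
and `τ = V_bs σ` is obtained from `σ` by inserting another `v = b_ℓ` right after
position `m`. -/
def vbsRel (σ τ : List ℤ) : Prop :=
  ∃ ℓ m, leadIdx σ ℓ ∧ las σ ℓ m ∧ σ.getD m 0 = σ.getD (ℓ + 1) 0 ∧
    τ = σ.insertIdx (m + 1) (σ.getD ℓ 0)

private lemma getD_insIdx_lt (l : List ℤ) (x : ℤ) (n k : ℕ) (hk : k < n) (hk' : k < l.length) :
    (l.insertIdx n x).getD k 0 = l.getD k 0 := by
  rw [List.getD_eq_getElem _ _ (hk'.trans_le List.length_le_length_insertIdx),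
    List.getD_eq_getElem _ _ hk']
  exact List.getElem_insertIdx_of_lt hk _

private lemma getD_insIdx_self (l : List ℤ) (x : ℤ) (n : ℕ) (hn : n ≤ l.length) :
    (l.insertIdx n x).getD n 0 = x := by
  rw [List.getD_eq_getElem _ _ (by rw [List.length_insertIdx_of_le_length hn]; omega)]
  exact List.getElem_insertIdx_self _

private lemma getD_erIdx_lt (l : List ℤ) (i j : ℕ) (hj : j < i) (h : j < (l.eraseIdx i).length) :
    (l.eraseIdx i).getD j 0 = l.getD j 0 := by
  have hjl : j < l.length := h.trans_le (List.length_eraseIdx_le _ _)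
  rw [List.getD_eq_getElem _ _ h, List.getD_eq_getElem _ _ hjl]
  exact List.getElem_eraseIdx_of_lt _ hj

private lemma getD_erIdx_ge (l : List ℤ) (i j : ℕ) (hi : i < l.length) (hij : i ≤ j)
    (h : j < (l.eraseIdx i).length) :
    (l.eraseIdx i).getD j 0 = l.getD (j + 1) 0 := by
  have hjl : j + 1 < l.length := by rw [List.length_eraseIdx_of_lt hi] at h; omega
  rw [List.getD_eq_getElem _ _ h, List.getD_eq_getElem _ _ hjl]
  exact List.getElem_eraseIdx_of_ge _ hij

/-- For a source simplex `σ = [b_0, …, b_k]` of the bubblesort field with leading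
alternating segment ending at position `m`, and `τ = V_bs σ` obtained by inserting
`v = b_ℓ` after position `m`, we have `∂_{m+1} τ = σ`, and `m+1` is the unique index `i`
with `∂ᵢ τ = σ`; i.e. `σ` is a regular face of `τ`.  (Faces of a tuple are obtained by
deleting one component.) -/
theorem stmt11 (b : List ℤ) (ℓ m : ℕ)
    (hnd : nondegZ b) (hlead : leadIdx b ℓ) (hlas : las b ℓ m)
    (hsrc : b.getD m 0 = b.getD (ℓ + 1) 0) :
    (b.insertIdx (m + 1) (b.getD ℓ 0)).eraseIdx (m + 1) = b ∧
    ∀ i < (b.insertIdx (m + 1) (b.getD ℓ 0)).length,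
      (b.insertIdx (m + 1) (b.getD ℓ 0)).eraseIdx i = b → i = m + 1 := by
  obtain ⟨hℓ1, -, huv⟩ := hlead
  obtain ⟨hℓm, hmn, -, hmax⟩ := hlas
  have hm1 : m + 1 ≤ b.length := hmn
  obtain ⟨τ, hτ⟩ : ∃ τ, b.insertIdx (m + 1) (b.getD ℓ 0) = τ := ⟨_, rfl⟩
  rw [hτ]
  have hlen : τ.length = b.length + 1 := by rw [← hτ]; exact List.length_insertIdx_of_le_length hm1 _
  constructor
  · rw [← hτ]; exact List.eraseIdx_insertIdx_self _
  intro i hi heq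
  by_contra hne
  have hlen' : (τ.eraseIdx i).length = b.length := by
    rw [List.length_eraseIdx_of_lt hi, hlen]
    omega
  rcases lt_or_gt_of_ne hne with hlt | hgt
  · have him : i ≤ m := by omega
    have h1 : (τ.eraseIdx i).getD i 0 = b.getD i 0 := by rw [heq]
    have h2 : (τ.eraseIdx i).getD i 0 = τ.getD (i + 1) 0 :=
      getD_erIdx_ge _ _ _ (by omega) le_rfl (by omega)
    rw [h2] at h1
    rcases eq_or_lt_of_le him with rfl | hlt'
    · rw [← hτ, getD_insIdx_self _ _ _ hm1] at h1
      rw [hsrc] at h1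
      omega
    · rw [← hτ, getD_insIdx_lt _ _ _ _ (by omega) (by omega)] at h1
      exact hnd i (by omega) h1.symm
  · have hmb : m + 1 < b.length := by omega
    have h1 : (τ.eraseIdx i).getD (m + 1) 0 = b.getD (m + 1) 0 := by rw [heq]
    have h2 : (τ.eraseIdx i).getD (m + 1) 0 = τ.getD (m + 1) 0 :=
      getD_erIdx_lt _ _ _ hgt (by omega)
    rw [h2, ← hτ, getD_insIdx_self _ _ _ hm1] at h1
    rcases hmax with h | ⟨h, -⟩
    · omega
    · exact h h1.symm
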